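/- arXiv:1401.1442 — 3 statements merged into one kernel-verified Lean document; each statement's English description precedes it below -/
import Mathlib

section
/- Marginal of the site occupation numbers (Proposition 2.1(a)): for every finitely supported η : ℤ^d → ℕ with Σ_{x∈ℤ^d} η_x = n, one has Σ_{r ∈ Λ_n with η_x(r) = η_x for all x} W(r) = ∏_{x∈ℤ^d} h_{η_x}·exp(−η_x·V(x/L)); consequently P_{L,n}({r : η_x(r) = η_x for all x}) = (1/Z_{L,n})·∏_{x∈ℤ^d} h_{η_x}·exp(−η_x·V(x/L)). -/
open scoped BigOperators ENNReal NNReal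
open Filter MeasureTheory

namespace Spart

/-- `exp(-t)` for an extended-real `t`, with `exp(-∞) = 0`. -/
noncomputable def expNeg (t : ℝ≥0∞) : ℝ := if t = ∞ then 0 else Real.exp (-t.toReal)

/-- Sites of the lattice `ℤ^d`. -/
abbrev Site (d : ℕ) := Fin d → ℤ

/-- A spatial partition: a finitely supported family `(r_{x,j})` of natural numbers.
(Only indices `j ≥ 1` are meaningful; configurations are supported on `j ≥ 1`.) -/
abbrev Config (d : ℕ) := (Site d × ℕ) →₀ ℕ

/-- The rescaled site `x/L ∈ ℝ^d`. -/
noncomputable def scaledSite {d : ℕ} (x : Site d) (L : ℝ) : Fin d → ℝ :=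
  fun i => (x i : ℝ) / L

/-- Site occupation number `η_x(r) = Σ_j j r_{x,j}`. -/
noncomputable def siteOcc {d : ℕ} (r : Config d) (x : Site d) : ℕ :=
  ∑ p ∈ r.support, if p.1 = x then p.2 * r p else 0

/-- Component counts `r_j(r) = Σ_x r_{x,j}`. -/
noncomputable def compCount {d : ℕ} (r : Config d) (j : ℕ) : ℕ :=
  ∑ p ∈ r.support, if p.2 = j then r p else 0

/-- Total mass `Σ_{x,j} j r_{x,j}`. -/
noncomputable def mass {d : ℕ} (r : Config d) : ℕ :=
  ∑ p ∈ r.support, p.2 * r p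

/-- The (unnormalized) weight of a spatial partition. -/
noncomputable def W {d : ℕ} (V : (Fin d → ℝ) → ℝ≥0∞) (θ : ℕ → ℝ) (L : ℝ) (r : Config d) : ℝ :=
  ∏ p ∈ r.support,
    (1 / (Nat.factorial (r p)) : ℝ) *
      ((θ p.2 / (p.2 : ℝ)) * expNeg ((p.2 : ℝ≥0∞) * V (scaledSite p.1 L))) ^ (r p)

/-- The canonical partition function `Z_{L,n}`. -/
noncomputable def Z {d : ℕ} (V : (Fin d → ℝ) → ℝ≥0∞) (θ : ℕ → ℝ) (L : ℝ) (n : ℕ) : ℝ :=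
  ∑' r : {r : Config d // mass r = n}, W V θ L (r : Config d)

/-- The probability of an event under the canonical measure `P_{L,n}`. -/
noncomputable def P {d : ℕ} (V : (Fin d → ℝ) → ℝ≥0∞) (θ : ℕ → ℝ) (L : ℝ) (n : ℕ)
    (E : Set (Config d)) : ℝ :=
  (∑' r : {r : Config d // mass r = n ∧ r ∈ E}, W V θ L (r : Config d)) / Z V θ L n

/-- Expectation of an observable under the canonical measure `P_{L,n}`. -/
noncomputable def Ex {d : ℕ} (V : (Fin d → ℝ) → ℝ≥0∞) (θ : ℕ → ℝ) (L : ℝ) (n : ℕ)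
    (f : Config d → ℝ) : ℝ :=
  (∑' r : {r : Config d // mass r = n}, f (r : Config d) * W V θ L (r : Config d)) / Z V θ L n

/-- Single-site normalization `h_m = Σ_{λ ⊢ m} ∏_j (1/ρ_j(λ)!) (θ_j/j)^{ρ_j(λ)}`. -/
noncomputable def hcoef (θ : ℕ → ℝ) (m : ℕ) : ℝ :=
  ∑ lam : Nat.Partition m, ∏ j ∈ lam.parts.toFinset,
    (1 / (Nat.factorial (Multiset.count j lam.parts)) : ℝ) *
      (θ j / (j : ℝ)) ^ (Multiset.count j lam.parts)

end Spart

namespace Spart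

lemma expNeg_zero : expNeg 0 = 1 := by simp [expNeg]

lemma expNeg_add (a b : ℝ≥0∞) : expNeg (a + b) = expNeg a * expNeg b := by
  unfold expNeg
  by_cases ha : a = ∞
  · simp [ha]
  by_cases hb : b = ∞
  · simp [hb]
  rw [if_neg (by simp [ENNReal.add_eq_top, ha, hb]), if_neg ha, if_neg hb,
    ENNReal.toReal_add ha hb, neg_add, Real.exp_add]

lemma expNeg_pow (t : ℝ≥0∞) (k : ℕ) : expNeg t ^ k = expNeg ((k : ℝ≥0∞) * t) := by
  induction k with
  | zero => simp [expNeg]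
  | succ k ih =>
      rw [pow_succ, ih, ← expNeg_add]
      congr 1
      push_cast
      ring

lemma expNeg_sum {ι : Type*} (u : Finset ι) (f : ι → ℝ≥0∞) :
    expNeg (∑ i ∈ u, f i) = ∏ i ∈ u, expNeg (f i) := by
  classical
  induction u using Finset.induction with
  | empty => simp [expNeg]
  | @insert a u ha ih => rw [Finset.sum_insert ha, Finset.prod_insert ha, expNeg_add, ih]

lemma siteOcc_eq_sum_box {d : ℕ} (r : Config d) (x : Site d) (T : Finset ℕ)
    (hT : ∀ j, r (x, j) ≠ 0 → j ∈ T) :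
    siteOcc r x = ∑ j ∈ T, j * r (x, j) := by
  classical
  have h1 : siteOcc r x
      = ∑ p ∈ r.support ∪ ({x} ×ˢ T), (if p.1 = x then p.2 * r p else 0) :=
    Finset.sum_subset Finset.subset_union_left (by
      intro p _ hp
      have hrp : r p = 0 := Finsupp.notMem_support_iff.mp hp
      simp [hrp])
  have h2 : ∑ p ∈ ({x} ×ˢ T), (if p.1 = x then p.2 * r p else 0)
      = ∑ p ∈ r.support ∪ ({x} ×ˢ T), (if p.1 = x then p.2 * r p else 0) :=
    Finset.sum_subset Finset.subset_union_right (by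
      intro p hp hnot
      obtain ⟨y, j⟩ := p
      rcases eq_or_ne y x with rfl | hyx
      · exfalso
        apply hnot
        rcases Finset.mem_union.mp hp with h | h
        · exact Finset.mem_product.mpr ⟨Finset.mem_singleton_self _,
            hT j (Finsupp.mem_support_iff.mp h)⟩
        · exact h
      · simp [hyx])
  calc siteOcc r x = ∑ p ∈ r.support ∪ ({x} ×ˢ T), (if p.1 = x then p.2 * r p else 0) := h1
    _ = ∑ p ∈ ({x} ×ˢ T), (if p.1 = x then p.2 * r p else 0) := h2.symm
    _ = ∑ j ∈ T, j * r (x, j) := by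
        rw [Finset.singleton_product, Finset.sum_map]
        simp

lemma mass_eq_sum_siteOcc {d : ℕ} (r : Config d) (A : Finset (Site d))
    (hA : ∀ p ∈ r.support, p.1 ∈ A) :
    mass r = ∑ x ∈ A, siteOcc r x := by
  classical
  unfold mass siteOcc
  rw [Finset.sum_comm]
  refine Finset.sum_congr rfl fun p hp => ?_
  rw [Finset.sum_ite_eq A p.1 (fun _ => p.2 * r p), if_pos (hA p hp)]

lemma W_eq_prod_box {d : ℕ} (V : (Fin d → ℝ) → ℝ≥0∞) (θ : ℕ → ℝ) (L : ℝ) (r : Config d)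
    (t : Finset (Site d × ℕ)) (ht : r.support ⊆ t) :
    W V θ L r = ∏ p ∈ t,
      (1 / (Nat.factorial (r p)) : ℝ) *
        ((θ p.2 / (p.2 : ℝ)) * expNeg ((p.2 : ℝ≥0∞) * V (scaledSite p.1 L))) ^ (r p) := by
  refine Finset.prod_subset ht fun p _ hp => ?_
  have hrp : r p = 0 := Finsupp.notMem_support_iff.mp hp
  simp [hrp]

lemma multiset_sum_eq (M : Multiset ℕ) (T : Finset ℕ) (hT : M.toFinset ⊆ T) :
    ∑ j ∈ T, j * M.count j = M.sum := by
  classical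
  have h1 : ∑ j ∈ T, j * M.count j = ∑ j ∈ M.toFinset, j * M.count j := by
    symm
    refine Finset.sum_subset hT fun j _ hj => ?_
    have : M.count j = 0 := by
      rwa [Multiset.count_eq_zero, ← Multiset.mem_toFinset]
    simp [this]
  have h2 : M.sum = ∑ a ∈ M.toFinset, M.count a • a := by
    conv_lhs => rw [← Multiset.map_id M]
    rw [← Finset.sum_multiset_map_count]
    rfl
  rw [h1, h2]
  exact Finset.sum_congr rfl fun j _ => by rw [smul_eq_mul, mul_comm]

lemma local_prod {d : ℕ} (V : (Fin d → ℝ) → ℝ≥0∞) (θ : ℕ → ℝ) (L : ℝ) (n : ℕ)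
    (x : Site d) (m : ℕ) (hm : m ≤ n) (lam : Nat.Partition m) :
    (∏ j ∈ Finset.range (n+1),
      (1 / (Nat.factorial (Multiset.count j lam.parts)) : ℝ) *
        ((θ j / (j : ℝ)) * expNeg ((j : ℝ≥0∞) * V (scaledSite x L))) ^
          (Multiset.count j lam.parts))
    = (∏ j ∈ lam.parts.toFinset,
        (1 / (Nat.factorial (Multiset.count j lam.parts)) : ℝ) *
          (θ j / (j : ℝ)) ^ (Multiset.count j lam.parts)) *
      expNeg ((m : ℝ≥0∞) * V (scaledSite x L)) := by
  classical
  have hsubT : lam.parts.toFinset ⊆ Finset.range (n+1) := by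
    intro j hj
    have hj' : j ∈ lam.parts := Multiset.mem_toFinset.mp hj
    have hjm : j ≤ m := by
      have := Multiset.single_le_sum (s := lam.parts) (fun _ _ => Nat.zero_le _) j hj'
      rwa [lam.parts_sum] at this
    exact Finset.mem_range.mpr (by omega)
  simp_rw [mul_pow, ← mul_assoc]
  rw [Finset.prod_mul_distrib]
  congr 1
  · symm
    refine Finset.prod_subset hsubT fun j _ hj => ?_
    have : Multiset.count j lam.parts = 0 := by
      rwa [Multiset.count_eq_zero, ← Multiset.mem_toFinset]
    simp [this]
  · simp_rw [expNeg_pow]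
    rw [← expNeg_sum]
    congr 1
    have hcong : ∀ j ∈ Finset.range (n+1),
        ((Multiset.count j lam.parts : ℝ≥0∞)) * ((j : ℝ≥0∞) * V (scaledSite x L))
        = ((j * Multiset.count j lam.parts : ℕ) : ℝ≥0∞) * V (scaledSite x L) := by
      intro j _
      push_cast
      ring
    rw [Finset.sum_congr rfl hcong, ← Finset.sum_mul, ← Nat.cast_sum,
      multiset_sum_eq lam.parts _ hsubT, lam.parts_sum]

/-- Proposition 2.1(a): marginal of the site occupation numbers. -/
theorem statement0 (d : ℕ) (hd : 1 ≤ d)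
    (V : (Fin d → ℝ) → ℝ≥0∞) (θ : ℕ → ℝ) (L : ℝ) (n : ℕ)
    (hL : 0 < L) (hθ : ∀ j, 1 ≤ j → 0 ≤ θ j)
    (hZsum : Summable (fun r : {r : Config d // mass r = n} => W V θ L (r : Config d)))
    (hZpos : 0 < Z V θ L n)
    (η : Site d →₀ ℕ) (hη : ∑ x ∈ η.support, η x = n) :
    (∑' r : {r : Config d // mass r = n ∧ ∀ x : Site d, siteOcc r x = η x},
        W V θ L (r : Config d))
      = ∏ x ∈ η.support, hcoef θ (η x) * expNeg ((η x : ℝ≥0∞) * V (scaledSite x L)) ∧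
    P V θ L n {r | ∀ x : Site d, siteOcc r x = η x}
      = (1 / Z V θ L n) *
          ∏ x ∈ η.support, hcoef θ (η x) * expNeg ((η x : ℝ≥0∞) * V (scaledSite x L)) := by
  classical
  have hetan : ∀ x, η x ≤ n := by
    intro x
    by_cases hx : x ∈ η.support
    · exact hη ▸ Finset.single_le_sum (f := fun x => η x) (fun _ _ => Nat.zero_le _) hx
    · simp [Finsupp.notMem_support_iff.mp hx]
  set B := Finset.range (n+1) with hB
  set g : (∀ x : {x // x ∈ η.support}, Nat.Partition (η ↑x)) → ℝ := fun p =>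
    ∏ x : {x // x ∈ η.support},
      (∏ j ∈ (p x).parts.toFinset,
        (1 / (Nat.factorial (Multiset.count j (p x).parts)) : ℝ) *
          (θ j / (j : ℝ)) ^ (Multiset.count j (p x).parts)) *
        expNeg ((η ↑x : ℝ≥0∞) * V (scaledSite ↑x L)) with hg
  set cnt : (∀ x : {x // x ∈ η.support}, Nat.Partition (η ↑x)) → Site d × ℕ → ℕ :=
    fun p q => if h : q.1 ∈ η.support then Multiset.count q.2 (p ⟨q.1, h⟩).parts else 0
    with hcntdef
  have hcnt : ∀ p q, cnt p q ≠ 0 → q ∈ η.support ×ˢ B := by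
    intro p q hq
    obtain ⟨x, j⟩ := q
    simp only [hcntdef] at hq
    by_cases hx : x ∈ η.support
    · rw [dif_pos hx] at hq
      have hmem : j ∈ (p ⟨x, hx⟩).parts := by
        rwa [← Multiset.count_pos, Nat.pos_iff_ne_zero]
      have hle : j ≤ η x := by
        have := Multiset.single_le_sum (s := (p ⟨x, hx⟩).parts)
          (fun _ _ => Nat.zero_le _) j hmem
        rwa [(p ⟨x, hx⟩).parts_sum] at this
      exact Finset.mem_product.mpr ⟨hx, Finset.mem_range.mpr (by have := hetan x; omega)⟩
    · rw [dif_neg hx] at hq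
      exact absurd rfl hq
  set ι : (∀ x : {x // x ∈ η.support}, Nat.Partition (η ↑x)) → Config d := fun p =>
    Finsupp.onFinset (η.support ×ˢ B) (cnt p) (hcnt p) with hι
  have hι_apply : ∀ p q, ι p q = cnt p q := fun p q => rfl
  have hι_pos : ∀ p (y : Site d) (j : ℕ) (hy : y ∈ η.support),
      ι p (y, j) = Multiset.count j (p ⟨y, hy⟩).parts := fun p y j hy => dif_pos hy
  have hι_neg : ∀ p (y : Site d) (j : ℕ), y ∉ η.support → ι p (y, j) = 0 :=
    fun p y j hy => dif_neg hy
  have hι_supp : ∀ p, (ι p).support ⊆ η.support ×ˢ B :=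
    fun p => Finsupp.support_onFinset_subset
  have hocc : ∀ p x, siteOcc (ι p) x = η x := by
    intro p x
    by_cases hx : x ∈ η.support
    · rw [siteOcc_eq_sum_box (ι p) x B
        (fun j hj => (Finset.mem_product.mp (hcnt p (x, j) hj)).2)]
      rw [Finset.sum_congr rfl fun j _ => by rw [hι_pos p x j hx]]
      have hsub2 : (p ⟨x, hx⟩).parts.toFinset ⊆ B := by
        intro j hj
        have hmem : j ∈ (p ⟨x, hx⟩).parts := Multiset.mem_toFinset.mp hj
        have hle : j ≤ η x := by
          have := Multiset.single_le_sum (s := (p ⟨x, hx⟩).parts)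
            (fun _ _ => Nat.zero_le _) j hmem
          rwa [(p ⟨x, hx⟩).parts_sum] at this
        exact Finset.mem_range.mpr (by have := hetan x; omega)
      rw [multiset_sum_eq _ B hsub2, (p ⟨x, hx⟩).parts_sum]
    · rw [siteOcc, Finsupp.notMem_support_iff.mp hx]
      refine Finset.sum_eq_zero fun q hq => ?_
      have hq1 : q.1 ∈ η.support := (Finset.mem_product.mp (hι_supp p hq)).1
      rw [if_neg]
      intro h
      exact hx (by rwa [h] at hq1)
  have hmass : ∀ p, mass (ι p) = n := by
    intro p
    rw [mass_eq_sum_siteOcc (ι p) η.support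
      (fun q hq => (Finset.mem_product.mp (hι_supp p hq)).1)]
    rw [Finset.sum_congr rfl fun x _ => hocc p x, hη]
  have hW : ∀ p, W V θ L (ι p) = g p := by
    intro p
    rw [W_eq_prod_box V θ L (ι p) (η.support ×ˢ B) (hι_supp p), Finset.prod_product, hg]
    rw [← Finset.prod_coe_sort η.support]
    refine Finset.prod_congr rfl fun x _ => ?_
    have hstep : ∀ j ∈ B,
        (1 / (Nat.factorial ((ι p) (↑x, j))) : ℝ) *
          ((θ j / (j : ℝ)) * expNeg ((j : ℝ≥0∞) * V (scaledSite ↑x L))) ^ ((ι p) (↑x, j))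
        = (1 / (Nat.factorial (Multiset.count j (p x).parts)) : ℝ) *
          ((θ j / (j : ℝ)) * expNeg ((j : ℝ≥0∞) * V (scaledSite ↑x L))) ^
            (Multiset.count j (p x).parts) := by
      intro j _
      rw [hι_pos p ↑x j x.2]
    rw [Finset.prod_congr rfl hstep]
    exact local_prod V θ L n ↑x (η ↑x) (hetan ↑x) (p x)
  have hinj : Function.Injective ι := by
    intro p p' h
    funext x
    refine Nat.Partition.ext ?_
    ext j
    have h2 := DFunLike.congr_fun h ((↑x : Site d), j)
    rw [hι_pos p ↑x j x.2, hι_pos p' ↑x j x.2] at h2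
    exact h2
  have hcover : ∀ r : Config d, (∀ x, siteOcc r x = η x) → W V θ L r ≠ 0 → ∃ p, ι p = r := by
    intro r hr hW0
    have hpos : ∀ q ∈ r.support, 1 ≤ q.2 := by
      intro q hq
      by_contra hq2
      have hq0 : q.2 = 0 := by omega
      apply hW0
      rw [W]
      refine Finset.prod_eq_zero hq ?_
      have hrq : r q ≠ 0 := Finsupp.mem_support_iff.mp hq
      rw [hq0]
      simp [zero_pow hrq]
    have hsub : r.support ⊆ η.support ×ˢ B := by
      intro q hq
      obtain ⟨x, j⟩ := q
      have hj1 : 1 ≤ j := hpos _ hq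
      have hrq : 1 ≤ r (x, j) :=
        Nat.one_le_iff_ne_zero.mpr (Finsupp.mem_support_iff.mp hq)
      have hle : j * r (x, j) ≤ siteOcc r x := by
        have := Finset.single_le_sum
          (f := fun p : Site d × ℕ => if p.1 = x then p.2 * r p else 0)
          (fun q _ => by positivity) hq
        simpa [siteOcc] using this
      rw [hr x] at hle
      have hjn : j ≤ η x := le_trans (Nat.le_mul_of_pos_right j hrq) hle
      have h11 : 0 < j * r (x, j) := Nat.mul_pos hj1 hrq
      exact Finset.mem_product.mpr
        ⟨Finsupp.mem_support_iff.mpr (Nat.pos_iff_ne_zero.mp (lt_of_lt_of_le h11 hle)),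
         Finset.mem_range.mpr (Nat.lt_succ_of_le (le_trans hjn (hetan x)))⟩
    have hbx : ∀ (x : Site d) (j : ℕ), r (x, j) ≠ 0 → j ∈ B := by
      intro x j h
      exact (Finset.mem_product.mp (hsub (Finsupp.mem_support_iff.mpr h))).2
    have ppos : ∀ (x : {x // x ∈ η.support}) (i : ℕ),
        i ∈ Finsupp.toMultiset (Finsupp.onFinset B (fun j => r (↑x, j)) (hbx ↑x)) → 0 < i := by
      intro x i hi
      rw [Finsupp.mem_toMultiset, Finsupp.mem_support_iff, Finsupp.onFinset_apply] at hi
      exact hpos (↑x, i) (Finsupp.mem_support_iff.mpr hi)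
    have psum : ∀ x : {x // x ∈ η.support},
        (Finsupp.toMultiset (Finsupp.onFinset B (fun j => r (↑x, j)) (hbx ↑x))).sum = η ↑x := by
      intro x
      have hts : (Finsupp.toMultiset (Finsupp.onFinset B (fun j => r (↑x, j))
          (hbx ↑x))).toFinset ⊆ B := by
        rw [Finsupp.toFinset_toMultiset]
        exact Finsupp.support_onFinset_subset
      rw [← multiset_sum_eq _ B hts]
      rw [← hr ↑x, siteOcc_eq_sum_box r ↑x B (hbx ↑x)]
      refine Finset.sum_congr rfl fun j _ => ?_
      rw [Finsupp.count_toMultiset, Finsupp.onFinset_apply]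
    let pr : ∀ x : {x // x ∈ η.support}, Nat.Partition (η ↑x) := fun x =>
      { parts := Finsupp.toMultiset (Finsupp.onFinset B (fun j => r (↑x, j)) (hbx ↑x))
        parts_pos := fun {i} hi => ppos x i hi
        parts_sum := psum x }
    refine ⟨pr, ?_⟩
    apply Finsupp.ext
    intro q
    obtain ⟨y, j⟩ := q
    by_cases hy : y ∈ η.support
    · refine (hι_pos pr y j hy).trans ?_
      exact Finsupp.count_toMultiset (Finsupp.onFinset B (fun j => r (y, j)) (hbx y)) j
    · refine (hι_neg pr y j hy).trans ?_
      symm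
      by_contra hne
      exact hy (Finset.mem_product.mp (hsub (Finsupp.mem_support_iff.mpr hne))).1
  have key : (∑' r : {r : Config d // mass r = n ∧ ∀ x : Site d, siteOcc r x = η x},
      W V θ L (r : Config d)) = ∑' p, g p := by
    refine tsum_eq_tsum_of_ne_zero_bij
      (f := fun r : {r : Config d // mass r = n ∧ ∀ x : Site d, siteOcc r x = η x} =>
        W V θ L (r : Config d))
      (fun p => ⟨ι ↑p, hmass ↑p, hocc ↑p⟩) ?_ ?_ ?_
    · intro p p' h
      exact Subtype.ext (hinj (congrArg Subtype.val h))
    · intro r hr0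
      obtain ⟨p, hp⟩ := hcover ↑r r.2.2 hr0
      refine ⟨⟨p, ?_⟩, ?_⟩
      · show g p ≠ 0
        rw [← hW p, hp]
        exact hr0
      · exact Subtype.ext hp
    · intro p
      exact hW ↑p
  have hrhs : ∏ x ∈ η.support, hcoef θ (η x) * expNeg ((η x : ℝ≥0∞) * V (scaledSite x L))
      = ∑' p, g p := by
    rw [tsum_fintype]
    rw [← Finset.prod_coe_sort η.support]
    have hstep : ∀ x : {x // x ∈ η.support},
        hcoef θ (η ↑x) * expNeg ((η ↑x : ℝ≥0∞) * V (scaledSite ↑x L))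
        = ∑ lam ∈ (Finset.univ : Finset (Nat.Partition (η ↑x))),
            (∏ j ∈ lam.parts.toFinset,
              (1 / (Nat.factorial (Multiset.count j lam.parts)) : ℝ) *
                (θ j / (j : ℝ)) ^ (Multiset.count j lam.parts)) *
              expNeg ((η ↑x : ℝ≥0∞) * V (scaledSite ↑x L)) := by
      intro x
      rw [hcoef, Finset.sum_mul]
    rw [Finset.prod_congr rfl fun x _ => hstep x, Finset.prod_univ_sum]
    rw [Fintype.piFinset_univ]
  have main : (∑' r : {r : Config d // mass r = n ∧ ∀ x : Site d, siteOcc r x = η x},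
      W V θ L (r : Config d))
      = ∏ x ∈ η.support, hcoef θ (η x) * expNeg ((η x : ℝ≥0∞) * V (scaledSite x L)) := by
    rw [key, hrhs]
  refine ⟨main, ?_⟩
  rw [P]
  have hEq : (∑' r : {r : Config d // mass r = n ∧
        r ∈ {r : Config d | ∀ x : Site d, siteOcc r x = η x}}, W V θ L (r : Config d))
      = ∏ x ∈ η.support, hcoef θ (η x) * expNeg ((η x : ℝ≥0∞) * V (scaledSite x L)) := main
  rw [hEq, div_eq_mul_inv, mul_comm, ← one_div]

end Spart
end

section
/- Conditional law given the component counts (Proposition 2.2(b)): suppose S_j := Σ_{x∈ℤ^d} exp(−j·V(x/L)) ∈ (0,∞) for every j ≥ 1. Let (ρ_j)_{j≥1} be a finitely supported sequence of nonnegative integers with Σ_j j·ρ_j = n, with θ_j > 0 whenever ρ_j ≥ 1. Then for every r ∈ Λ_n with r_j(r) = ρ_j for all j, the conditional probability P_{L,n}({r} | {r' : r_j(r') = ρ_j for all j}) equals ∏_{j≥1} [ (ρ_j! / ∏_{x∈ℤ^d} r_{x,j}!) · ∏_{x∈ℤ^d} p_{x,j}^{r_{x,j}} ], where p_{x,j}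 = exp(−j·V(x/L))/S_j; that is, given the component counts, for each j the ρ_j components of size j are placed on sites independently according to the multinomial law with probabilities (p_{x,j})_x. -/
open scoped BigOperators ENNReal NNReal
open Filter MeasureTheory

section Aux
open Finset
universe u

lemma tsum_pi_prod_fin : ∀ (n : ℕ) (κ : Fin n → Type u) (g : ∀ i, κ i → ℝ≥0∞),
    ∑' f : ∀ i, κ i, ∏ i, g i (f i) = ∏ i, ∑' x, g i x := by
  intro n
  induction n with
  | zero =>
    intro κ g
    have : (Finset.univ : Finset (Fin 0)) = ∅ := rfl
    haveI : Unique (∀ i, κ i) := ⟨⟨fun i => Fin.elim0 i⟩, fun f => funext fun i => Fin.elim0 i⟩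
    simp [tsum_eq_single (default : ∀ i, κ i) (fun b hb => absurd (Subsingleton.elim b default) hb)]
  | succ n ih =>
    intro κ g
    rw [← Equiv.tsum_eq (Fin.consEquiv κ) (fun f => ∏ i, g i (f i))]
    have h1 : ∀ p : κ 0 × (∀ i : Fin n, κ i.succ),
        (∏ i, g i ((Fin.consEquiv κ) p i)) = g 0 p.1 * ∏ i : Fin n, g i.succ (p.2 i) := by
      intro p
      rw [Fin.prod_univ_succ]
      simp [Fin.consEquiv]
    calc ∑' p : κ 0 × (∀ i : Fin n, κ i.succ), ∏ i, g i ((Fin.consEquiv κ) p i)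
        = ∑' (x : κ 0) (f : ∀ i : Fin n, κ i.succ), g 0 x * ∏ i : Fin n, g i.succ (f i) := by
          rw [ENNReal.tsum_prod']; simp_rw [h1]
      _ = (∑' x : κ 0, g 0 x) * ∏ i : Fin n, ∑' x, g i.succ x := by
          simp_rw [ENNReal.tsum_mul_left, ih (fun i => κ i.succ) (fun i => g i.succ)]
          rw [ENNReal.tsum_mul_right]
      _ = ∏ i, ∑' x, g i x := by rw [Fin.prod_univ_succ]

lemma tsum_pi_prod {ι : Type*} [Fintype ι] (κ : ι → Type u) (g : ∀ i, κ i → ℝ≥0∞) :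
    ∑' f : ∀ i, κ i, ∏ i, g i (f i) = ∏ i, ∑' x, g i x := by
  obtain ⟨n, ⟨e⟩⟩ : ∃ n, Nonempty (ι ≃ Fin n) := ⟨_, ⟨Fintype.equivFin ι⟩⟩
  have key := tsum_pi_prod_fin n (fun j => κ (e.symm j)) (fun j => g (e.symm j))
  rw [← Equiv.tsum_eq (Equiv.piCongrLeft' κ e)
      (fun h => ∏ j, g (e.symm j) (h j))] at key
  simp only [Equiv.piCongrLeft'_apply] at key
  calc ∑' f : ∀ i, κ i, ∏ i, g i (f i)
      = ∑' f : ∀ i, κ i, ∏ j, g (e.symm j) (f (e.symm j)) := by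
        congr 1; funext f; exact (Equiv.prod_comp e.symm (fun i => g i (f i))).symm
    _ = ∏ j, ∑' x, g (e.symm j) x := key
    _ = ∏ i, ∑' x, g i x := Equiv.prod_comp e.symm (fun i => ∑' x, g i x)


lemma sum_piAntidiag_div (ι : Type*) [DecidableEq ι] (a : ι → ℝ≥0∞) (T : Finset ι) (m : ℕ) :
    ∑ k ∈ piAntidiag T m, ∏ x ∈ T, a x ^ k x / (Nat.factorial (k x) : ℝ≥0∞)
      = (∑ x ∈ T, a x) ^ m / (Nat.factorial m : ℝ≥0∞) := by
  have hm0 : (Nat.factorial m : ℝ≥0∞) ≠ 0 := by exact_mod_cast Nat.factorial_ne_zero m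
  have hmt : (Nat.factorial m : ℝ≥0∞) ≠ ⊤ := by simp
  rw [ENNReal.eq_div_iff hm0 hmt, Finset.mul_sum, Finset.sum_pow_eq_sum_piAntidiag]
  refine Finset.sum_congr rfl fun k hk => ?_
  obtain ⟨hsum, -⟩ := Finset.mem_piAntidiag.1 hk
  have hspec : ((∏ x ∈ T, Nat.factorial (k x) : ℕ) : ℝ≥0∞) * (Nat.multinomial T k : ℝ≥0∞)
      = (Nat.factorial m : ℝ≥0∞) := by
    rw [← Nat.cast_mul, Nat.multinomial_spec, hsum]
  have hprod : ∏ x ∈ T, a x ^ k x / (Nat.factorial (k x) : ℝ≥0∞)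
      = (∏ x ∈ T, a x ^ k x) * ∏ x ∈ T, ((Nat.factorial (k x) : ℝ≥0∞))⁻¹ := by
    rw [← Finset.prod_mul_distrib]
    exact Finset.prod_congr rfl fun x _ => (div_eq_mul_inv _ _)
  have hcancel : (Nat.factorial m : ℝ≥0∞) * ∏ x ∈ T, ((Nat.factorial (k x) : ℝ≥0∞))⁻¹
      = (Nat.multinomial T k : ℝ≥0∞) := by
    rw [← hspec, Nat.cast_prod, mul_comm _ (Nat.multinomial T k : ℝ≥0∞), mul_assoc,
      ← Finset.prod_mul_distrib]
    have : ∏ x ∈ T, (Nat.factorial (k x) : ℝ≥0∞) * ((Nat.factorial (k x) : ℝ≥0∞))⁻¹ = 1 := by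
      refine Finset.prod_eq_one fun x _ => ENNReal.mul_inv_cancel ?_ (by simp)
      exact_mod_cast Nat.factorial_ne_zero (k x)
    rw [this, mul_one]
  rw [hprod, ← mul_assoc, mul_comm (Nat.factorial m : ℝ≥0∞) (∏ x ∈ T, a x ^ k x), mul_assoc,
    hcancel, mul_comm]

lemma sum_finsuppAntidiag_div (ι : Type*) [DecidableEq ι] (a : ι → ℝ≥0∞) (T : Finset ι) (m : ℕ) :
    ∑ f ∈ finsuppAntidiag T m,
        ∏ x ∈ f.support, a x ^ f x / (Nat.factorial (f x) : ℝ≥0∞)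
      = (∑ x ∈ T, a x) ^ m / (Nat.factorial m : ℝ≥0∞) := by
  rw [← sum_piAntidiag_div ι a T m]
  classical
  have honf : ∀ k ∈ piAntidiag T m, ∀ x : ι, k x ≠ 0 → x ∈ T := by
    intro k hk
    exact (Finset.mem_piAntidiag.1 hk).2
  refine Finset.sum_nbij' (fun f => (f : ι → ℕ))
    (fun k => if hk : k ∈ piAntidiag T m then Finsupp.onFinset T k (honf k hk) else 0)
    ?_ ?_ ?_ ?_ ?_
  · intro f hf
    obtain ⟨hs, hsupp⟩ := Finset.mem_finsuppAntidiag.1 hf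
    refine Finset.mem_piAntidiag.2 ⟨hs, fun x hx => hsupp (Finsupp.mem_support_iff.2 hx)⟩
  · intro k hk
    beta_reduce
    rw [dif_pos hk]
    obtain ⟨hs, _⟩ := Finset.mem_piAntidiag.1 hk
    refine Finset.mem_finsuppAntidiag.2 ⟨by simpa using hs, Finsupp.support_onFinset_subset⟩
  · intro f hf
    have hf' : (f : ι → ℕ) ∈ piAntidiag T m := by
      obtain ⟨hs, hsupp⟩ := Finset.mem_finsuppAntidiag.1 hf
      exact Finset.mem_piAntidiag.2 ⟨hs, fun x hx => hsupp (Finsupp.mem_support_iff.2 hx)⟩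
    beta_reduce
    rw [dif_pos hf']
    ext x
    simp
  · intro k hk
    beta_reduce
    rw [dif_pos hk]
    rfl
  · intro f hf
    obtain ⟨hs, hsupp⟩ := Finset.mem_finsuppAntidiag.1 hf
    refine (Finset.prod_subset hsupp fun x _ hx => ?_)
    rw [Finsupp.notMem_support_iff.1 hx]
    simp

lemma tsum_finsupp_div (ι : Type*) [DecidableEq ι] (a : ι → ℝ≥0∞) (m : ℕ) :
    ∑' f : {f : ι →₀ ℕ // f.sum (fun _ k => k) = m},
        ∏ x ∈ (f : ι →₀ ℕ).support,
          a x ^ (f : ι →₀ ℕ) x / (Nat.factorial ((f : ι →₀ ℕ) x) : ℝ≥0∞)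
      = (∑' x, a x) ^ m / (Nat.factorial m : ℝ≥0∞) := by
  classical
  set G : (ι →₀ ℕ) → ℝ≥0∞ :=
    fun f => ∏ x ∈ f.support, a x ^ f x / (Nat.factorial (f x) : ℝ≥0∞) with hG
  apply le_antisymm
  · rw [ENNReal.tsum_eq_iSup_sum]
    apply iSup_le
    intro s
    set T : Finset ι := s.biUnion (fun f => (f : ι →₀ ℕ).support) with hT
    have h1 : ∀ f ∈ s, (f : ι →₀ ℕ) ∈ Finset.finsuppAntidiag T m := by
      intro f hf
      have hsub : (f : ι →₀ ℕ).support ⊆ T := fun x hx => Finset.mem_biUnion.2 ⟨f, hf, hx⟩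
      refine Finset.mem_finsuppAntidiag.2 ⟨?_, hsub⟩
      rw [← Finsupp.sum_of_support_subset (f : ι →₀ ℕ) hsub (fun _ x => x) (fun _ _ => rfl)]
      exact f.2
    calc ∑ f ∈ s, G (f : ι →₀ ℕ)
        = ∑ g ∈ s.map ⟨Subtype.val, Subtype.coe_injective⟩, G g := by
          rw [Finset.sum_map]
          rfl
      _ ≤ ∑ g ∈ Finset.finsuppAntidiag T m, G g := by
          refine Finset.sum_le_sum_of_subset ?_
          intro g hg
          obtain ⟨f, hf, rfl⟩ := Finset.mem_map.1 hg
          exact h1 f hf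
      _ = (∑ x ∈ T, a x) ^ m / (Nat.factorial m : ℝ≥0∞) := sum_finsuppAntidiag_div ι a T m
      _ ≤ (∑' x, a x) ^ m / (Nat.factorial m : ℝ≥0∞) := by
          gcongr
          exact ENNReal.sum_le_tsum T
  · have hs : Filter.Tendsto (fun T : Finset ι => ∑ x ∈ T, a x) Filter.atTop
        (nhds (∑' x, a x)) := ENNReal.summable.hasSum
    have hcont : Continuous (fun z : ℝ≥0∞ => z ^ m / (Nat.factorial m : ℝ≥0∞)) := by
      simp_rw [div_eq_mul_inv]
      exact (ENNReal.continuous_mul_const (by simp [Nat.factorial_ne_zero])).comp (ENNReal.continuous_pow m)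
    refine le_of_tendsto ((hcont.tendsto _).comp hs) (Filter.Eventually.of_forall fun T => ?_)
    have heq : ((fun z : ℝ≥0∞ => z ^ m / (Nat.factorial m : ℝ≥0∞)) ∘
        fun T : Finset ι => ∑ x ∈ T, a x) T
        = ∑ f ∈ Finset.finsuppAntidiag T m, G f := (sum_finsuppAntidiag_div ι a T m).symm
    rw [heq]
    have hmem : ∀ f ∈ Finset.finsuppAntidiag T m, (f.sum fun _ k => k) = m :=
      fun f hf => (Finset.mem_finsuppAntidiag'.1 hf).1
    set t : Finset {f : ι →₀ ℕ // (f.sum fun _ k => k) = m} :=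
      (Finset.finsuppAntidiag T m).attach.map
        ⟨fun f => ⟨f.1, hmem f.1 f.2⟩, fun f g h => Subtype.ext (congrArg Subtype.val h : (f : ι →₀ ℕ) = g)⟩ with ht
    have h2 : ∑ f ∈ Finset.finsuppAntidiag T m, G f = ∑ g ∈ t, G (g : ι →₀ ℕ) := by
      rw [ht, Finset.sum_map]
      exact (Finset.sum_attach _ _).symm
    rw [h2]
    exact ENNReal.sum_le_tsum t

end Aux


namespace Spart

variable {d : ℕ}

/-- The extended-real single-site weight `exp(-jV(x/L))` as an `ℝ≥0∞`. -/
noncomputable def ae (V : (Fin d → ℝ) → ℝ≥0∞) (L : ℝ) (j : ℕ) (x : Site d) : ℝ≥0∞ :=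
  ENNReal.ofReal (expNeg ((j : ℝ≥0∞) * V (scaledSite x L)))

lemma expNeg_nonneg (t : ℝ≥0∞) : 0 ≤ expNeg t := by
  unfold expNeg
  split
  · exact le_rfl
  · exact (Real.exp_pos _).le

lemma toReal_ae (V : (Fin d → ℝ) → ℝ≥0∞) (L : ℝ) (j : ℕ) (x : Site d) :
    (ae V L j x).toReal = expNeg ((j : ℝ≥0∞) * V (scaledSite x L)) :=
  ENNReal.toReal_ofReal (expNeg_nonneg _)

lemma prod_support_eq {M : Type*} [CommMonoid M] (r' : Config d) (X : Finset (Site d))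
    (B : Finset ℕ) (hsub : r'.support ⊆ X ×ˢ B) (F : Site d × ℕ → M)
    (hF : ∀ p, r' p = 0 → F p = 1) :
    ∏ p ∈ r'.support, F p = ∏ j ∈ B, ∏ x ∈ X, F (x, j) := by
  have h1 : ∏ p ∈ r'.support, F p = ∏ p ∈ X ×ˢ B, F p :=
    Finset.prod_subset hsub (fun p _ hp => hF p (Finsupp.notMem_support_iff.1 hp))
  rw [h1, Finset.prod_product, Finset.prod_comm]

lemma compCount_eq_sum (r' : Config d) (j : ℕ) (X : Finset (Site d))
    (hX : r'.support.image Prod.fst ⊆ X) :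
    compCount r' j = ∑ x ∈ X, r' (x, j) := by
  classical
  set B : Finset ℕ := insert j (r'.support.image Prod.snd) with hB
  have hsub : r'.support ⊆ X ×ˢ B := by
    intro p hp
    rw [Finset.mem_product]
    exact ⟨hX (Finset.mem_image_of_mem _ hp),
      Finset.mem_insert.2 (Or.inr (Finset.mem_image_of_mem _ hp))⟩
  rw [compCount, Finset.sum_subset hsub
      (fun p _ hp => by rw [Finsupp.notMem_support_iff.1 hp]; simp),
    Finset.sum_product]
  refine Finset.sum_congr rfl fun x _ => ?_
  rw [show (∑ j' ∈ B, if ((x, j') : Site d × ℕ).2 = j then r' (x, j') else 0)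
      = ∑ j' ∈ B, if j' = j then r' (x, j') else 0 from rfl,
    Finset.sum_ite_eq' B j (fun j' => r' (x, j')), if_pos (Finset.mem_insert_self _ _)]

lemma apply_eq_zero_of_compCount_eq_zero {r' : Config d} {j : ℕ}
    (h : compCount r' j = 0) (x : Site d) : r' (x, j) = 0 := by
  have h2 := compCount_eq_sum r' j (insert x (r'.support.image Prod.fst))
    (Finset.subset_insert _ _)
  rw [h] at h2
  exact (Finset.sum_eq_zero_iff.1 h2.symm) x (Finset.mem_insert_self _ _)

lemma mass_eq_sum_compCount (r' : Config d) (B : Finset ℕ)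
    (hB : r'.support.image Prod.snd ⊆ B) :
    mass r' = ∑ j ∈ B, j * compCount r' j := by
  classical
  set X := r'.support.image Prod.fst with hX
  have hsub : r'.support ⊆ X ×ˢ B := fun p hp => Finset.mem_product.2
    ⟨Finset.mem_image_of_mem _ hp, hB (Finset.mem_image_of_mem _ hp)⟩
  rw [mass, Finset.sum_subset hsub
      (fun p _ hp => by rw [Finsupp.notMem_support_iff.1 hp, mul_zero]),
    Finset.sum_product, Finset.sum_comm]
  refine Finset.sum_congr rfl fun j _ => ?_
  rw [compCount_eq_sum r' j X (subset_refl _), Finset.mul_sum]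

lemma mass_of_Econd {ρv : ℕ →₀ ℕ} {n : ℕ} (hρn : ∑ j ∈ ρv.support, j * ρv j = n)
    (r' : Config d) (hE : ∀ j, compCount r' j = ρv j) : mass r' = n := by
  classical
  rw [mass_eq_sum_compCount r' (r'.support.image Prod.snd ∪ ρv.support)
    Finset.subset_union_left]
  simp only [hE]
  rw [← hρn]
  exact (Finset.sum_subset Finset.subset_union_right
    (fun j _ hj => by rw [Finsupp.notMem_support_iff.1 hj, mul_zero])).symm

/-- The `j`-slice of a configuration. -/
noncomputable def slice (r' : Config d) (j : ℕ) : Site d →₀ ℕ :=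
  Finsupp.onFinset (r'.support.image Prod.fst) (fun x => r' (x, j))
    (fun x hx => Finset.mem_image.2 ⟨(x, j), Finsupp.mem_support_iff.2 hx, rfl⟩)

@[simp] lemma slice_apply (r' : Config d) (j : ℕ) (x : Site d) :
    slice r' j x = r' (x, j) := rfl

lemma slice_support_subset (r' : Config d) (j : ℕ) :
    (slice r' j).support ⊆ r'.support.image Prod.fst := Finsupp.support_onFinset_subset

lemma slice_sum (r' : Config d) (j : ℕ) :
    ((slice r' j).sum fun _ k => k) = compCount r' j := by
  rw [Finsupp.sum_of_support_subset _ (slice_support_subset r' j) _ (fun _ _ => rfl),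
    compCount_eq_sum r' j _ (subset_refl _)]
  exact Finset.sum_congr rfl fun x _ => rfl

/-- Glue a family of slices into a configuration. -/
noncomputable def glue (A : Finset ℕ) (F : ∀ _ : {j // j ∈ A}, Site d →₀ ℕ) : Config d :=
  Finsupp.onFinset (A.attach.biUnion fun j => (F j).support.image fun x => (x, (j : ℕ)))
    (fun p => if h : p.2 ∈ A then F ⟨p.2, h⟩ p.1 else 0)
    (by
      intro p hp
      rw [Finset.mem_biUnion]
      by_cases h : p.2 ∈ A
      · refine ⟨⟨p.2, h⟩, Finset.mem_attach _ _, ?_⟩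
        simp only [dif_pos h] at hp
        exact Finset.mem_image.2 ⟨p.1, Finsupp.mem_support_iff.2 hp, by simp⟩
      · simp only [dif_neg h] at hp; exact absurd rfl hp)

lemma glue_apply_mem (A : Finset ℕ) (F : ∀ _ : {j // j ∈ A}, Site d →₀ ℕ)
    {j : ℕ} (h : j ∈ A) (x : Site d) : glue A F (x, j) = F ⟨j, h⟩ x := by
  show (if h' : j ∈ A then F ⟨j, h'⟩ x else 0) = _
  rw [dif_pos h]

lemma glue_apply_not (A : Finset ℕ) (F : ∀ _ : {j // j ∈ A}, Site d →₀ ℕ)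
    {j : ℕ} (h : j ∉ A) (x : Site d) : glue A F (x, j) = 0 := by
  show (if h' : j ∈ A then F ⟨j, h'⟩ x else 0) = 0
  rw [dif_neg h]

lemma compCount_glue (A : Finset ℕ) (F : ∀ _ : {j // j ∈ A}, Site d →₀ ℕ) (j : ℕ) :
    compCount (glue A F) j = if h : j ∈ A then (F ⟨j, h⟩).sum (fun _ k => k) else 0 := by
  classical
  rw [← slice_sum]
  split_ifs with h
  · congr 1
    ext x
    rw [slice_apply, glue_apply_mem A F h x]
  · have h0 : slice (glue A F) j = 0 := by
      ext x
      rw [slice_apply, glue_apply_not A F h x]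
      rfl
    rw [h0]
    simp [Finsupp.sum]

/-- The conditional-event subtype is equivalent to independent slices. -/
noncomputable def econdEquiv (ρv : ℕ →₀ ℕ) (n : ℕ)
    (hρn : ∑ j ∈ ρv.support, j * ρv j = n) :
    {r' : Config d // mass r' = n ∧ r' ∈ {r'' : Config d | ∀ j : ℕ, compCount r'' j = ρv j}} ≃
      ∀ j : {j // j ∈ ρv.support}, {f : Site d →₀ ℕ // (f.sum fun _ k => k) = ρv j} where
  toFun r' j := ⟨slice r'.1 j, by rw [slice_sum]; exact r'.2.2 j⟩
  invFun F := ⟨glue ρv.support (fun j => (F j).1), by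
    have hE : ∀ j, compCount (glue ρv.support (fun j => (F j).1)) j = ρv j := by
      intro j
      rw [compCount_glue]
      split_ifs with h
      · exact (F ⟨j, h⟩).2
      · exact (Finsupp.notMem_support_iff.1 h).symm
    exact ⟨mass_of_Econd hρn _ hE, hE⟩⟩
  left_inv r' := by
    apply Subtype.ext
    ext p
    obtain ⟨x, j⟩ := p
    by_cases h : j ∈ ρv.support
    · rw [glue_apply_mem _ _ h]; rfl
    · rw [glue_apply_not _ _ h]
      exact (apply_eq_zero_of_compCount_eq_zero
        (by rw [r'.2.2 j, Finsupp.notMem_support_iff.1 h]) x).symm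
  right_inv F := by
    funext j
    apply Subtype.ext
    ext x
    rw [slice_apply, glue_apply_mem _ _ j.2 x]


lemma ofReal_W_eq (V : (Fin d → ℝ) → ℝ≥0∞) (θ : ℕ → ℝ) (L : ℝ)
    (hθ : ∀ j, 1 ≤ j → 0 ≤ θ j) (ρv : ℕ →₀ ℕ) (hρ0 : ρv 0 = 0)
    (r' : Config d) (hE : ∀ j, compCount r' j = ρv j) :
    ENNReal.ofReal (W V θ L r') =
      ∏ j ∈ ρv.support,
        (ENNReal.ofReal (θ j / j) ^ ρv j *
          ∏ x ∈ (slice r' j).support,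
            ae V L j x ^ slice r' j x / (Nat.factorial (slice r' j x) : ℝ≥0∞)) := by
  classical
  have hmem : ∀ p ∈ r'.support, p.2 ∈ ρv.support := by
    intro p hp
    by_contra h
    have h0 : compCount r' p.2 = 0 := by rw [hE p.2, Finsupp.notMem_support_iff.1 h]
    have h1 := apply_eq_zero_of_compCount_eq_zero h0 p.1
    rw [Prod.mk.eta] at h1
    exact Finsupp.mem_support_iff.1 hp h1
  have hone : ∀ p ∈ r'.support, 1 ≤ p.2 := by
    intro p hp
    have h2 := hmem p hp
    rcases Nat.eq_zero_or_pos p.2 with h0 | h1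
    · rw [h0] at h2; exact absurd hρ0 (Finsupp.mem_support_iff.1 h2)
    · exact h1
  have hbase : ∀ p : Site d × ℕ, p ∈ r'.support →
      0 ≤ θ p.2 / (p.2 : ℝ) * expNeg ((p.2 : ℝ≥0∞) * V (scaledSite p.1 L)) := fun p hp =>
    mul_nonneg (div_nonneg (hθ p.2 (hone p hp)) (Nat.cast_nonneg _)) (expNeg_nonneg _)
  rw [W, ENNReal.ofReal_prod_of_nonneg
    (fun p hp => mul_nonneg (by positivity) (pow_nonneg (hbase p hp) _))]
  have hfac : ∀ p ∈ r'.support,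
      ENNReal.ofReal ((1 / (Nat.factorial (r' p)) : ℝ) *
        ((θ p.2 / (p.2 : ℝ)) * expNeg ((p.2 : ℝ≥0∞) * V (scaledSite p.1 L))) ^ (r' p))
      = ENNReal.ofReal (θ p.2 / p.2) ^ r' p *
          (ae V L p.2 p.1 ^ r' p / (Nat.factorial (r' p) : ℝ≥0∞)) := by
    intro p hp
    rw [ENNReal.ofReal_mul (by positivity), ENNReal.ofReal_pow (hbase p hp),
      ENNReal.ofReal_mul (div_nonneg (hθ p.2 (hone p hp)) (Nat.cast_nonneg _)),
      mul_pow,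
      show ENNReal.ofReal ((1 : ℝ) / (Nat.factorial (r' p) : ℝ))
        = ((Nat.factorial (r' p) : ℝ≥0∞))⁻¹ by
          rw [one_div, ← ENNReal.ofReal_natCast, ← ENNReal.ofReal_inv_of_pos (by positivity)],
      ae]
    simp only [div_eq_mul_inv]
    ring
  rw [Finset.prod_congr rfl hfac]
  set X := r'.support.image Prod.fst with hX
  have hsub : r'.support ⊆ X ×ˢ ρv.support := fun p hp =>
    Finset.mem_product.2 ⟨Finset.mem_image_of_mem _ hp, hmem p hp⟩
  rw [prod_support_eq r' X ρv.support hsub _ (fun p hp => by rw [hp]; simp)]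
  refine Finset.prod_congr rfl fun j hj => ?_
  dsimp only
  rw [Finset.prod_mul_distrib]
  congr 1
  · rw [Finset.prod_pow_eq_pow_sum]
    congr 1
    rw [← compCount_eq_sum r' j X (subset_refl _), hE j]
  · rw [show (∏ x ∈ (slice r' j).support,
        ae V L j x ^ slice r' j x / (Nat.factorial (slice r' j x) : ℝ≥0∞))
        = ∏ x ∈ (slice r' j).support,
            ae V L j x ^ r' (x, j) / (Nat.factorial (r' (x, j)) : ℝ≥0∞) from rfl]
    refine (Finset.prod_subset (slice_support_subset r' j) fun x hx hnx => ?_).symm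
    have h0 : slice r' j x = 0 := Finsupp.notMem_support_iff.1 hnx
    rw [slice_apply] at h0
    rw [h0]
    simp

lemma tsum_ofReal_W (V : (Fin d → ℝ) → ℝ≥0∞) (θ : ℕ → ℝ) (L : ℝ)
    (hθ : ∀ j, 1 ≤ j → 0 ≤ θ j) (ρv : ℕ →₀ ℕ) (n : ℕ) (hρ0 : ρv 0 = 0)
    (hρn : ∑ j ∈ ρv.support, j * ρv j = n) :
    ∑' r' : {r' : Config d // mass r' = n ∧
        r' ∈ {r'' : Config d | ∀ j : ℕ, compCount r'' j = ρv j}},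
        ENNReal.ofReal (W V θ L r'.1)
      = ∏ j ∈ ρv.support,
          (ENNReal.ofReal (θ j / j) ^ ρv j *
            ((∑' x : Site d, ae V L j x) ^ ρv j / (Nat.factorial (ρv j) : ℝ≥0∞))) := by
  classical
  set g : ∀ j : {j // j ∈ ρv.support},
      {f : Site d →₀ ℕ // (f.sum fun _ k => k) = ρv j} → ℝ≥0∞ :=
    fun j f => ENNReal.ofReal (θ (j : ℕ) / (j : ℕ)) ^ ρv (j : ℕ) *
      ∏ x ∈ (f : Site d →₀ ℕ).support,
        ae V L (j : ℕ) x ^ (f : Site d →₀ ℕ) x /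
          (Nat.factorial ((f : Site d →₀ ℕ) x) : ℝ≥0∞) with hg
  rw [← Equiv.tsum_eq (econdEquiv ρv n hρn).symm
    (fun r' => ENNReal.ofReal (W V θ L r'.1))]
  have hW : ∀ F : ∀ j : {j // j ∈ ρv.support},
      {f : Site d →₀ ℕ // (f.sum fun _ k => k) = ρv j},
      ENNReal.ofReal (W V θ L ((econdEquiv ρv n hρn).symm F).1)
        = ∏ j : {j // j ∈ ρv.support}, g j (F j) := by
    intro F
    rw [ofReal_W_eq V θ L hθ ρv hρ0 _ ((econdEquiv ρv n hρn).symm F).2.2,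
      ← Finset.prod_coe_sort]
    refine Finset.prod_congr rfl fun j _ => ?_
    have hslice : slice ((econdEquiv ρv n hρn).symm F).1 (j : ℕ) = (F j : Site d →₀ ℕ) := by
      have h1 := (econdEquiv ρv n hρn).apply_symm_apply F
      have h2 := congrFun h1 j
      exact congrArg Subtype.val h2
    rw [hg, hslice]
  calc ∑' F : ∀ j : {j // j ∈ ρv.support},
        {f : Site d →₀ ℕ // (f.sum fun _ k => k) = ρv j},
        ENNReal.ofReal (W V θ L ((econdEquiv ρv n hρn).symm F).1)
      = ∑' F : ∀ j : {j // j ∈ ρv.support},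
          {f : Site d →₀ ℕ // (f.sum fun _ k => k) = ρv j},
          ∏ j : {j // j ∈ ρv.support}, g j (F j) := by
        exact tsum_congr hW
    _ = ∏ j : {j // j ∈ ρv.support}, ∑' f, g j f := tsum_pi_prod _ g
    _ = ∏ j : {j // j ∈ ρv.support},
          (ENNReal.ofReal (θ (j : ℕ) / (j : ℕ)) ^ ρv (j : ℕ) *
            ((∑' x : Site d, ae V L (j : ℕ) x) ^ ρv (j : ℕ) /
              (Nat.factorial (ρv (j : ℕ)) : ℝ≥0∞))) := by
        refine Finset.prod_congr rfl fun j _ => ?_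
        rw [hg]
        dsimp only
        rw [ENNReal.tsum_mul_left, tsum_finsupp_div (Site d) (ae V L (j : ℕ)) (ρv (j : ℕ))]
    _ = ∏ j ∈ ρv.support,
          (ENNReal.ofReal (θ j / j) ^ ρv j *
            ((∑' x : Site d, ae V L j x) ^ ρv j / (Nat.factorial (ρv j) : ℝ≥0∞))) :=
        Finset.prod_coe_sort ρv.support (fun j : ℕ => ENNReal.ofReal (θ j / j) ^ ρv j *
          ((∑' x : Site d, ae V L j x) ^ ρv j / (Nat.factorial (ρv j) : ℝ≥0∞)))

end Spart

namespace Spart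

set_option maxHeartbeats 1000000 in
/-- Proposition 2.2(b): conditional law given the component counts is
multinomial with probabilities `p_{x,j} = exp(-jV(x/L))/S_j`. -/
theorem statement3 (d : ℕ) (hd : 1 ≤ d)
    (V : (Fin d → ℝ) → ℝ≥0∞) (θ : ℕ → ℝ) (L : ℝ) (n : ℕ)
    (hL : 0 < L) (hθ : ∀ j, 1 ≤ j → 0 ≤ θ j)
    (hZsum : Summable (fun r : {r : Config d // mass r = n} => W V θ L (r : Config d)))
    (hZpos : 0 < Z V θ L n)
    (hSsum : ∀ j : ℕ, 1 ≤ j →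
      Summable (fun x : Site d => expNeg ((j : ℝ≥0∞) * V (scaledSite x L))))
    (hSpos : ∀ j : ℕ, 1 ≤ j →
      0 < ∑' x : Site d, expNeg ((j : ℝ≥0∞) * V (scaledSite x L)))
    (ρv : ℕ →₀ ℕ) (hρ0 : ρv 0 = 0) (hρn : ∑ j ∈ ρv.support, j * ρv j = n)
    (hθρ : ∀ j : ℕ, 1 ≤ ρv j → 0 < θ j)
    (hEpos : 0 < P V θ L n {r' | ∀ j : ℕ, compCount r' j = ρv j})
    (r : Config d) (hmass : mass r = n) (hr0 : ∀ x : Site d, r (x, 0) = 0)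
    (hrρ : ∀ j : ℕ, compCount r j = ρv j) :
    P V θ L n {r} / P V θ L n {r' | ∀ j : ℕ, compCount r' j = ρv j}
      = ∏ j ∈ ρv.support,
          (((Nat.factorial (ρv j) : ℝ) /
              ∏ x ∈ r.support.image Prod.fst, (Nat.factorial (r (x, j)) : ℝ)) *
            ∏ x ∈ r.support.image Prod.fst,
              (expNeg ((j : ℝ≥0∞) * V (scaledSite x L)) /
                  ∑' y : Site d, expNeg ((j : ℝ≥0∞) * V (scaledSite y L))) ^ (r (x, j))) := by
  classical
  set X := r.support.image Prod.fst with hXdef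
  have hjA : ∀ j ∈ ρv.support, 1 ≤ j := by
    intro j hj
    rcases Nat.eq_zero_or_pos j with h0 | h1
    · subst h0; exact absurd hρ0 (Finsupp.mem_support_iff.1 hj)
    · exact h1
  have hSofReal : ∀ j ∈ ρv.support, (∑' x : Site d, ae V L j x)
      = ENNReal.ofReal (∑' x : Site d, expNeg ((j : ℝ≥0∞) * V (scaledSite x L))) := by
    intro j hj
    rw [ENNReal.ofReal_tsum_of_nonneg (fun x => expNeg_nonneg _) (hSsum j (hjA j hj))]
    exact tsum_congr fun x => rfl
  have hnum : P V θ L n {r} = W V θ L r / Z V θ L n := by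
    rw [P]
    congr 1
    refine tsum_eq_single
      (⟨r, hmass, rfl⟩ : {r' : Config d // mass r' = n ∧ r' ∈ ({r} : Set (Config d))})
      (fun b hb => ?_)
    exact absurd (Subtype.ext (Set.mem_singleton_iff.1 b.2.2)) hb
  have hWnonneg : ∀ r' : Config d, 0 ≤ W V θ L r' := by
    intro r'
    refine Finset.prod_nonneg fun p hp => mul_nonneg (by positivity) (pow_nonneg ?_ _)
    rcases Nat.eq_zero_or_pos p.2 with h0 | h1
    · rw [h0, Nat.cast_zero, div_zero, zero_mul]
    · exact mul_nonneg (div_nonneg (hθ p.2 h1) (Nat.cast_nonneg _)) (expNeg_nonneg _)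
  have hDsum : Summable (fun r' : {r' : Config d // mass r' = n ∧ r' ∈ {r'' : Config d | ∀ j : ℕ, compCount r'' j = ρv j}} =>
      W V θ L r'.1) := by
    have hinj : Function.Injective
        (fun r' : {r' : Config d // mass r' = n ∧ r' ∈ {r'' : Config d | ∀ j : ℕ, compCount r'' j = ρv j}} =>
          (⟨r'.1, r'.2.1⟩ : {q : Config d // mass q = n})) := by
      intro a b h
      exact Subtype.ext (congrArg Subtype.val h :
        ((⟨a.1, a.2.1⟩ : {q : Config d // mass q = n}) : Config d) = (⟨b.1, b.2.1⟩ : {q : Config d // mass q = n}))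
    exact (hZsum.comp_injective hinj).congr (fun r' => rfl)
  set Dr : ℝ := ∑' r' : {r' : Config d // mass r' = n ∧ r' ∈ {r'' : Config d | ∀ j : ℕ, compCount r'' j = ρv j}}, W V θ L r'.1 with hDr
  have hDofReal : ENNReal.ofReal Dr = ∏ j ∈ ρv.support,
      (ENNReal.ofReal (θ j / j) ^ ρv j *
        ((∑' x : Site d, ae V L j x) ^ ρv j / (Nat.factorial (ρv j) : ℝ≥0∞))) := by
    calc ENNReal.ofReal Dr
        = ∑' r' : {r' : Config d // mass r' = n ∧
              r' ∈ {r'' : Config d | ∀ j : ℕ, compCount r'' j = ρv j}},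
            ENNReal.ofReal (W V θ L r'.1) := by
          rw [hDr]
          exact ENNReal.ofReal_tsum_of_nonneg (fun r' => hWnonneg r'.1) hDsum
      _ = ∏ j ∈ ρv.support,
            (ENNReal.ofReal (θ j / j) ^ ρv j *
              ((∑' x : Site d, ae V L j x) ^ ρv j / (Nat.factorial (ρv j) : ℝ≥0∞))) :=
          tsum_ofReal_W V θ L hθ ρv n hρ0 hρn
  have hSpos' : ∀ j ∈ ρv.support,
      0 < ∑' x : Site d, expNeg ((j : ℝ≥0∞) * V (scaledSite x L)) :=
    fun j hj => hSpos j (hjA j hj)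
  have hθpos : ∀ j ∈ ρv.support, 0 < θ j := fun j hj =>
    hθρ j (Nat.one_le_iff_ne_zero.2 (Finsupp.mem_support_iff.1 hj))
  have hθdivpos : ∀ j ∈ ρv.support, 0 < θ j / (j : ℝ) := fun j hj =>
    div_pos (hθpos j hj) (by exact_mod_cast hjA j hj)
  have hDr_eq : Dr = ∏ j ∈ ρv.support, ((θ j / j) ^ ρv j *
      ((∑' x : Site d, expNeg ((j : ℝ≥0∞) * V (scaledSite x L))) ^ ρv j /
        (Nat.factorial (ρv j) : ℝ))) := by
    have hDrnonneg : 0 ≤ Dr := by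
      rw [hDr]
      exact tsum_nonneg (fun r' => hWnonneg r'.1)
    have h1 : Dr = (ENNReal.ofReal Dr).toReal := (ENNReal.toReal_ofReal hDrnonneg).symm
    rw [h1, hDofReal, ENNReal.toReal_prod]
    refine Finset.prod_congr rfl fun j hj => ?_
    rw [hSofReal j hj, ENNReal.toReal_mul, ENNReal.toReal_pow,
      ENNReal.toReal_ofReal (hθdivpos j hj).le, ENNReal.toReal_div, ENNReal.toReal_pow,
      ENNReal.toReal_ofReal (hSpos' j hj).le, ENNReal.toReal_natCast]
  have hWr_real : W V θ L r = ∏ j ∈ ρv.support, ((θ j / j) ^ ρv j *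
      ∏ x ∈ (slice r j).support,
        (expNeg ((j : ℝ≥0∞) * V (scaledSite x L))) ^ r (x, j) /
          (Nat.factorial (r (x, j)) : ℝ)) := by
    have h1 : W V θ L r = (ENNReal.ofReal (W V θ L r)).toReal :=
      (ENNReal.toReal_ofReal (hWnonneg r)).symm
    rw [h1, ofReal_W_eq V θ L hθ ρv hρ0 r hrρ, ENNReal.toReal_prod]
    refine Finset.prod_congr rfl fun j hj => ?_
    rw [ENNReal.toReal_mul, ENNReal.toReal_pow, ENNReal.toReal_ofReal (hθdivpos j hj).le,
      ENNReal.toReal_prod]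
    congr 1
    refine Finset.prod_congr rfl fun x hx => ?_
    rw [ENNReal.toReal_div, ENNReal.toReal_pow, toReal_ae, ENNReal.toReal_natCast, slice_apply]
  have hZne : Z V θ L n ≠ 0 := ne_of_gt hZpos
  have hPE : P V θ L n {r' : Config d | ∀ j : ℕ, compCount r' j = ρv j}
      = Dr / Z V θ L n := by
    rw [hDr]
    rfl
  have hDrpos : 0 < Dr := by
    have h2 := hEpos
    rw [hPE] at h2
    calc (0 : ℝ) < (Dr / Z V θ L n) * Z V θ L n := mul_pos h2 hZpos
      _ = Dr := div_mul_cancel₀ Dr hZne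
  rw [hnum, hPE, div_div_div_comm, div_self hZne, div_one, hWr_real, hDr_eq,
    ← Finset.prod_div_distrib]
  refine Finset.prod_congr rfl fun j hj => ?_
  rw [mul_div_mul_left _ _ (ne_of_gt (pow_pos (hθdivpos j hj) (ρv j)))]
  set S : ℝ := ∑' x : Site d, expNeg ((j : ℝ≥0∞) * V (scaledSite x L)) with hS
  have hsum : ∑ x ∈ X, r (x, j) = ρv j := by
    rw [← compCount_eq_sum r j X (subset_refl _), hrρ j]
  have hext : (∏ x ∈ (slice r j).support,
      (expNeg ((j : ℝ≥0∞) * V (scaledSite x L))) ^ r (x, j) /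
        (Nat.factorial (r (x, j)) : ℝ))
      = ∏ x ∈ X, (expNeg ((j : ℝ≥0∞) * V (scaledSite x L))) ^ r (x, j) /
        (Nat.factorial (r (x, j)) : ℝ) := by
    refine Finset.prod_subset (slice_support_subset r j) fun x hx hnx => ?_
    have h0 : slice r j x = 0 := Finsupp.notMem_support_iff.1 hnx
    rw [slice_apply] at h0
    rw [h0]
    simp
  rw [hext, Finset.prod_div_distrib]
  have hR : ∏ x ∈ X, (expNeg ((j : ℝ≥0∞) * V (scaledSite x L)) / S) ^ r (x, j)
      = (∏ x ∈ X, (expNeg ((j : ℝ≥0∞) * V (scaledSite x L))) ^ r (x, j)) / S ^ ρv j := by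
    simp_rw [div_pow]
    rw [Finset.prod_div_distrib, Finset.prod_pow_eq_pow_sum, hsum]
  rw [hR]
  have hfacρ : (Nat.factorial (ρv j) : ℝ) ≠ 0 := by positivity
  have hkfac : (∏ x ∈ X, (Nat.factorial (r (x, j)) : ℝ)) ≠ 0 := by positivity
  have hSne : S ^ ρv j ≠ 0 := pow_ne_zero _ (ne_of_gt (hSpos' j hj))
  field_simp

end Spart
end

section
/- Correspondence between weights and single-site normalizations (Proposition 2.3): let (h_m)_{m≥0} be nonnegative real numbers with h_0 = 1 such that the power series Σ_{m≥0} h_m·z^m has a positive radius of convergence. Then there exists a unique sequence (θ_j)_{j≥1} of real numbers such that for all m ≥ 1, h_m = Σ_{λ ⊢ m} ∏_{j≥1} (1/ρ_j(λ)!)·(θ_j/j)^{ρ_j(λ)}. Moreover, θ_j ≥ 0 for all j ≥ 1 if and only if the sequence (h_m)_{m≥0} is infinitely divisible. -/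
open scoped BigOperators ENNReal NNReal
open Filter MeasureTheory

namespace Spart

/-- Convolution of two sequences. -/
noncomputable def convSeq (a b : ℕ → ℝ) : ℕ → ℝ :=
  fun m => ∑ k ∈ Finset.range (m + 1), a k * b (m - k)

/-- `n`-fold convolution of a sequence with itself (`nConv 0 g` is the unit for convolution). -/
noncomputable def nConv : ℕ → (ℕ → ℝ) → (ℕ → ℝ)
  | 0, _ => fun m => if m = 0 then 1 else 0
  | (k + 1), g => convSeq g (nConv k g)

/-- A sequence of nonnegative reals is infinitely divisible if for every `n ≥ 1` it is the
`n`-fold convolution of a sequence of nonnegative reals. -/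
def InfDivisible (h : ℕ → ℝ) : Prop :=
  ∀ n : ℕ, 1 ≤ n → ∃ g : ℕ → ℝ, (∀ m, 0 ≤ g m) ∧ nConv n g = h

/-! ### Auxiliary development -/

/-- The basic factor appearing in `hcoef`. -/
noncomputable def fct (θ : ℕ → ℝ) (j c : ℕ) : ℝ :=
  (1 / (Nat.factorial c) : ℝ) * (θ j / (j : ℝ)) ^ c

lemma fct_zero (θ : ℕ → ℝ) (j : ℕ) : fct θ j 0 = 1 := by simp [fct]

lemma hcoef_eq_fct (θ : ℕ → ℝ) (m : ℕ) :
    hcoef θ m = ∑ lam : Nat.Partition m, ∏ j ∈ lam.parts.toFinset,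
      fct θ j (Multiset.count j lam.parts) := rfl

lemma parts_subset_Icc {m : ℕ} (lam : Nat.Partition m) :
    lam.parts.toFinset ⊆ Finset.Icc 1 m := by
  intro j hj
  rw [Multiset.mem_toFinset] at hj
  exact Finset.mem_Icc.2 ⟨lam.parts_pos hj,
    (Multiset.le_sum_of_mem hj).trans_eq lam.parts_sum⟩

lemma prod_ext (θ : ℕ → ℝ) {m : ℕ} (lam : Nat.Partition m) {s : Finset ℕ}
    (hs : lam.parts.toFinset ⊆ s) :
    ∏ j ∈ lam.parts.toFinset, fct θ j (Multiset.count j lam.parts)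
      = ∏ j ∈ s, fct θ j (Multiset.count j lam.parts) := by
  refine Finset.prod_subset hs fun j _ hj => ?_
  rw [Multiset.count_eq_zero_of_notMem (by simpa using hj), fct_zero]

lemma hcoef_zero (θ : ℕ → ℝ) : hcoef θ 0 = 1 := by
  rw [hcoef]
  rw [Finset.sum_eq_single_of_mem (default : Nat.Partition 0) (Finset.mem_univ _)
    (fun b _ hb => absurd (Subsingleton.elim b default) hb)]
  simp

/-- Add a part `j` to a partition of `n - j`. -/
noncomputable def consP {n : ℕ} (j : ℕ) (hj1 : 1 ≤ j) (hjn : j ≤ n)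
    (mu : Nat.Partition (n - j)) : Nat.Partition n where
  parts := j ::ₘ mu.parts
  parts_pos := by
    intro i hi
    rcases Multiset.mem_cons.1 hi with h | h
    · omega
    · exact mu.parts_pos h
  parts_sum := by rw [Multiset.sum_cons, mu.parts_sum]; omega

/-- Remove one part `j` from a partition of `n`. -/
noncomputable def eraseP {n : ℕ} (j : ℕ) (lam : Nat.Partition n)
    (hmem : j ∈ lam.parts) : Nat.Partition (n - j) where
  parts := lam.parts.erase j
  parts_pos := fun h => lam.parts_pos (Multiset.mem_of_mem_erase h)
  parts_sum := by
    have h2 : j + (lam.parts.erase j).sum = n := by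
      rw [← Multiset.sum_cons, Multiset.cons_erase hmem, lam.parts_sum]
    omega

lemma fct_step (θ : ℕ → ℝ) {j c : ℕ} (hj : 1 ≤ j) (hc : 1 ≤ c) :
    ((j * c : ℕ) : ℝ) * fct θ j c = θ j * fct θ j (c - 1) := by
  obtain ⟨c', rfl⟩ : ∃ c', c = c' + 1 := ⟨c - 1, by omega⟩
  simp only [fct, Nat.succ_sub_one, Nat.factorial_succ, pow_succ]
  have hj0 : (j : ℝ) ≠ 0 := Nat.cast_ne_zero.2 (by omega)
  have hf : (Nat.factorial c' : ℝ) ≠ 0 := Nat.cast_ne_zero.2 c'.factorial_ne_zero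
  push_cast
  field_simp

lemma inner_sum (θ : ℕ → ℝ) {m j : ℕ} (hj : j ∈ Finset.Icc 1 m) :
    (∑ lam : Nat.Partition m, ((j * Multiset.count j lam.parts : ℕ) : ℝ) *
      ∏ i ∈ Finset.Icc 1 m, fct θ i (Multiset.count i lam.parts))
      = θ j * hcoef θ (m - j) := by
  obtain ⟨hj1, hjm⟩ := Finset.mem_Icc.1 hj
  -- rewrite RHS as a sum over partitions of `m - j` with products over `Icc 1 m`
  have hRHS : θ j * hcoef θ (m - j) = ∑ mu : Nat.Partition (m - j),
      θ j * ∏ i ∈ Finset.Icc 1 m, fct θ i (Multiset.count i mu.parts) := by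
    rw [hcoef_eq_fct, Finset.mul_sum]
    exact Finset.sum_congr rfl fun mu _ => by
      rw [prod_ext θ mu ((parts_subset_Icc mu).trans
        (Finset.Icc_subset_Icc_right (Nat.sub_le m j)))]
  rw [hRHS]
  -- drop the vanishing terms
  rw [← Finset.sum_filter_of_ne (p := fun lam : Nat.Partition m => j ∈ lam.parts)
    (fun lam _ hne => by
      by_contra hmem
      exact hne (by rw [Multiset.count_eq_zero_of_notMem hmem]; simp))]
  -- bijection between partitions of `m` containing `j` and partitions of `m - j`
  refine Finset.sum_bij' (fun lam hlam => eraseP j lam (Finset.mem_filter.1 hlam).2)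
    (fun mu _ => consP j hj1 hjm mu) ?_ ?_ ?_ ?_ ?_
  · intro a ha; exact Finset.mem_univ _
  · intro a _
    refine Finset.mem_filter.2 ⟨Finset.mem_univ _, ?_⟩
    show j ∈ j ::ₘ a.parts
    exact Multiset.mem_cons_self _ _
  · intro a ha
    apply Nat.Partition.ext
    show j ::ₘ a.parts.erase j = a.parts
    exact Multiset.cons_erase (Finset.mem_filter.1 ha).2
  · intro a _
    apply Nat.Partition.ext
    show (j ::ₘ a.parts).erase j = a.parts
    exact Multiset.erase_cons_head _ _
  · intro lam hlam
    have hmem : j ∈ lam.parts := (Finset.mem_filter.1 hlam).2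
    have hc : 1 ≤ Multiset.count j lam.parts := Multiset.one_le_count_iff_mem.2 hmem
    have hcount : ∀ i, Multiset.count i ((eraseP j lam hmem).parts) =
        if i = j then Multiset.count j lam.parts - 1 else Multiset.count i lam.parts := by
      intro i
      show Multiset.count i (lam.parts.erase j) = _
      split_ifs with h
      · subst h; exact Multiset.count_erase_self _ _
      · exact Multiset.count_erase_of_ne h _
    rw [← Finset.mul_prod_erase _ _ hj, ← Finset.mul_prod_erase _
      (fun i => fct θ i (Multiset.count i ((eraseP j lam hmem).parts))) hj]
    have hprod : ∏ i ∈ (Finset.Icc 1 m).erase j, fct θ i (Multiset.count i lam.parts)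
        = ∏ i ∈ (Finset.Icc 1 m).erase j,
            fct θ i (Multiset.count i ((eraseP j lam hmem).parts)) := by
      refine Finset.prod_congr rfl fun i hi => ?_
      rw [hcount i, if_neg (Finset.ne_of_mem_erase hi)]
    rw [← hprod, ← mul_assoc, ← mul_assoc, fct_step θ hj1 hc, hcount j, if_pos rfl]

lemma hcoef_rec (θ : ℕ → ℝ) {m : ℕ} (hm : 1 ≤ m) :
    (m : ℝ) * hcoef θ m = ∑ j ∈ Finset.Icc 1 m, θ j * hcoef θ (m - j) := by
  have hmass : ∀ lam : Nat.Partition m,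
      (m : ℝ) = ∑ j ∈ Finset.Icc 1 m, ((j * Multiset.count j lam.parts : ℕ) : ℝ) := by
    intro lam
    have h1 : ∑ j ∈ lam.parts.toFinset, Multiset.count j lam.parts • j = m := by
      have := Finset.sum_multiset_map_count lam.parts (id : ℕ → ℕ)
      rw [Multiset.map_id] at this
      simp only [id_eq] at this
      rw [← this, lam.parts_sum]
    have h2 : ∑ j ∈ Finset.Icc 1 m, Multiset.count j lam.parts • j = m := by
      rw [← Finset.sum_subset (parts_subset_Icc lam)
        (fun j _ hj => by rw [Multiset.count_eq_zero_of_notMem (by simpa using hj)]; simp)]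
      exact h1
    have h3 : ((∑ j ∈ Finset.Icc 1 m, Multiset.count j lam.parts • j : ℕ) : ℝ)
        = ∑ j ∈ Finset.Icc 1 m, ((j * Multiset.count j lam.parts : ℕ) : ℝ) := by
      push_cast [smul_eq_mul]
      exact Finset.sum_congr rfl fun j _ => by ring
    rw [← h3, h2]
  calc (m : ℝ) * hcoef θ m
      = ∑ lam : Nat.Partition m, ∑ j ∈ Finset.Icc 1 m,
          ((j * Multiset.count j lam.parts : ℕ) : ℝ) *
            ∏ i ∈ Finset.Icc 1 m, fct θ i (Multiset.count i lam.parts) := by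
        rw [hcoef_eq_fct, Finset.mul_sum]
        refine Finset.sum_congr rfl fun lam _ => ?_
        rw [prod_ext θ lam (parts_subset_Icc lam), ← Finset.sum_mul, ← hmass lam]
    _ = ∑ j ∈ Finset.Icc 1 m, ∑ lam : Nat.Partition m,
          ((j * Multiset.count j lam.parts : ℕ) : ℝ) *
            ∏ i ∈ Finset.Icc 1 m, fct θ i (Multiset.count i lam.parts) := Finset.sum_comm
    _ = ∑ j ∈ Finset.Icc 1 m, θ j * hcoef θ (m - j) :=
        Finset.sum_congr rfl fun j hj => inner_sum θ hj

/-- Uniqueness of solutions to the Newton-type recursion. -/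
lemma rec_unique (θ A B : ℕ → ℝ) (h0 : A 0 = B 0)
    (hA : ∀ m : ℕ, 1 ≤ m → (m : ℝ) * A m = ∑ j ∈ Finset.Icc 1 m, θ j * A (m - j))
    (hB : ∀ m : ℕ, 1 ≤ m → (m : ℝ) * B m = ∑ j ∈ Finset.Icc 1 m, θ j * B (m - j)) :
    ∀ m, A m = B m := by
  intro m
  induction m using Nat.strong_induction_on with
  | _ m ih =>
    rcases Nat.eq_zero_or_pos m with rfl | hm
    · exact h0
    · have key : (m : ℝ) * A m = (m : ℝ) * B m := by
        rw [hA m hm, hB m hm]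
        refine Finset.sum_congr rfl fun j hj => ?_
        obtain ⟨hj1, hjm⟩ := Finset.mem_Icc.1 hj
        rw [ih (m - j) (by omega)]
      have hm' : (m : ℝ) ≠ 0 := Nat.cast_ne_zero.2 (by omega)
      exact mul_left_cancel₀ hm' key

lemma sum_Icc_one (M : ℕ) (f : ℕ → ℝ) :
    ∑ j ∈ Finset.Icc 1 M, f j = ∑ i ∈ Finset.range M, f (i + 1) := by
  induction M with
  | zero => simp
  | succ M ih => rw [Finset.sum_Icc_succ_top (by omega : 1 ≤ M + 1), Finset.sum_range_succ, ih]

open PowerSeries in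
lemma rec_iff_ps (θ A : ℕ → ℝ) :
    (∀ m : ℕ, 1 ≤ m → (m : ℝ) * A m = ∑ j ∈ Finset.Icc 1 m, θ j * A (m - j)) ↔
      derivativeFun (PowerSeries.mk A)
        = PowerSeries.mk (fun i => θ (i + 1)) * PowerSeries.mk A := by
  have hco : ∀ n : ℕ, (PowerSeries.coeff n)
      (PowerSeries.mk (fun i => θ (i + 1)) * PowerSeries.mk A)
        = ∑ j ∈ Finset.Icc 1 (n + 1), θ j * A (n + 1 - j) := by
    intro n
    rw [PowerSeries.coeff_mul, Finset.Nat.sum_antidiagonal_eq_sum_range_succ_mk,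
      sum_Icc_one]
    refine Finset.sum_congr rfl fun i hi => ?_
    rw [PowerSeries.coeff_mk, PowerSeries.coeff_mk]
    congr 2
    omega
  constructor
  · intro hrec
    ext n
    rw [(show ∀ (f : PowerSeries ℝ) (n : ℕ), PowerSeries.coeff n f.derivativeFun = PowerSeries.coeff (n + 1) f * (n + 1) from fun f n => coeff_derivative f n), PowerSeries.coeff_mk, hco n, ← hrec (n + 1) (by omega)]
    push_cast; ring
  · intro heq m hm
    obtain ⟨n, rfl⟩ : ∃ n, m = n + 1 := ⟨m - 1, by omega⟩
    have := congrArg (PowerSeries.coeff n) heq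
    rw [(show ∀ (f : PowerSeries ℝ) (n : ℕ), PowerSeries.coeff n f.derivativeFun = PowerSeries.coeff (n + 1) f * (n + 1) from fun f n => coeff_derivative f n), PowerSeries.coeff_mk, hco n] at this
    rw [← this]; push_cast; ring

open PowerSeries in
lemma convSeq_hcoef (a b : ℕ → ℝ) :
    convSeq (hcoef a) (hcoef b) = hcoef (fun j => a j + b j) := by
  have hA := (rec_iff_ps a (hcoef a)).1 (fun m hm => hcoef_rec a hm)
  have hB := (rec_iff_ps b (hcoef b)).1 (fun m hm => hcoef_rec b hm)
  set C := convSeq (hcoef a) (hcoef b) with hCdef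
  have hmk : PowerSeries.mk C = PowerSeries.mk (hcoef a) * PowerSeries.mk (hcoef b) := by
    ext n
    rw [PowerSeries.coeff_mk, PowerSeries.coeff_mul,
      Finset.Nat.sum_antidiagonal_eq_sum_range_succ_mk]
    simp only [PowerSeries.coeff_mk]
    rfl
  have hSadd : PowerSeries.mk (fun i => a (i + 1) + b (i + 1))
      = PowerSeries.mk (fun i => a (i + 1)) + PowerSeries.mk (fun i => b (i + 1)) := by
    ext n; simp [PowerSeries.coeff_mk]
  have hC : derivativeFun (PowerSeries.mk C)
      = PowerSeries.mk (fun i => a (i + 1) + b (i + 1)) * PowerSeries.mk C := by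
    rw [hmk, derivativeFun_mul, hA, hB, smul_eq_mul, smul_eq_mul, hSadd]
    ring
  have hrecC := (rec_iff_ps (fun j => a j + b j) C).2 hC
  have hC0 : C 0 = 1 := by
    show convSeq (hcoef a) (hcoef b) 0 = 1
    simp [convSeq, hcoef_zero]
  funext m
  exact rec_unique (fun j => a j + b j) C (hcoef fun j => a j + b j)
    (by rw [hC0, hcoef_zero]) hrecC
    (fun m hm => hcoef_rec _ hm) m

lemma hcoef_zero_fun : hcoef (fun _ => (0 : ℝ)) = fun m => if m = 0 then 1 else 0 := by
  funext m
  rcases Nat.eq_zero_or_pos m with rfl | hm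
  · simp [hcoef_zero]
  · have := hcoef_rec (fun _ => (0 : ℝ)) hm
    simp only [zero_mul, Finset.sum_const_zero] at this
    have hm' : (m : ℝ) ≠ 0 := Nat.cast_ne_zero.2 (by omega)
    have : hcoef (fun _ => (0 : ℝ)) m = 0 := by
      rcases mul_eq_zero.1 this with hx | hx
      · exact absurd hx hm'
      · exact hx
    rw [this, if_neg (by omega)]

lemma nConv_hcoef (a : ℕ → ℝ) (n : ℕ) :
    nConv n (hcoef a) = hcoef (fun j => (n : ℝ) * a j) := by
  induction n with
  | zero =>
    show (fun m => if m = 0 then (1:ℝ) else 0) = _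
    rw [show (fun j => ((0:ℕ) : ℝ) * a j) = fun _ => (0:ℝ) by funext j; simp]
    exact hcoef_zero_fun.symm
  | succ n ih =>
    show convSeq (hcoef a) (nConv n (hcoef a)) = _
    rw [ih, convSeq_hcoef]
    have hfun : (fun j => hcoef a j + 0) = hcoef a := by funext j; ring
    have : (fun j => a j + (n : ℝ) * a j) = fun j => ((n + 1 : ℕ) : ℝ) * a j := by
      funext j; push_cast; ring
    rw [this]

lemma nConv_apply_zero (n : ℕ) (g : ℕ → ℝ) : nConv n g 0 = g 0 ^ n := by
  induction n with
  | zero => simp [nConv]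
  | succ n ih =>
    show convSeq g (nConv n g) 0 = g 0 ^ (n + 1)
    simp [convSeq, ih, pow_succ]
    ring

lemma hcoef_nonneg (θ : ℕ → ℝ) (hθ : ∀ j, 1 ≤ j → 0 ≤ θ j) (m : ℕ) :
    0 ≤ hcoef θ m := by
  rw [hcoef_eq_fct]
  refine Finset.sum_nonneg fun lam _ => Finset.prod_nonneg fun j hj => ?_
  have hj1 : 1 ≤ j := lam.parts_pos (Multiset.mem_toFinset.1 hj)
  exact mul_nonneg (by positivity)
    (pow_nonneg (div_nonneg (hθ j hj1) (by positivity)) _)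

lemma hcoef_scale (θ : ℕ → ℝ) (t : ℝ) (m : ℕ) :
    hcoef (fun k => t * θ k) m = ∑ lam : Nat.Partition m,
      (∏ j ∈ lam.parts.toFinset, fct θ j (Multiset.count j lam.parts)) *
        t ^ (Multiset.card lam.parts) := by
  rw [hcoef_eq_fct]
  refine Finset.sum_congr rfl fun lam _ => ?_
  rw [← Multiset.toFinset_sum_count_eq lam.parts, ← Finset.prod_pow_eq_pow_sum,
    ← Finset.prod_mul_distrib]
  refine Finset.prod_congr rfl fun j hj => ?_
  rw [fct, fct, mul_div_assoc, mul_pow]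
  ring

/-- The recursive construction of the weights from the normalization sequence. -/
noncomputable def thetaAux (h : ℕ → ℝ) : ℕ → ℕ → ℝ
  | 0, _ => 0
  | (m + 1), k =>
      if k = m + 1 then
        ((m : ℝ) + 1) * h (m + 1) - ∑ j ∈ Finset.Icc 1 m, thetaAux h m j * h (m + 1 - j)
      else thetaAux h m k

/-- The weight sequence associated to a normalization sequence. -/
noncomputable def thetaOf (h : ℕ → ℝ) (m : ℕ) : ℝ := thetaAux h m m

lemma thetaAux_agree (h : ℕ → ℝ) : ∀ m k, k ≤ m → thetaAux h m k = thetaOf h k := by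
  intro m
  induction m with
  | zero => intro k hk; interval_cases k; rfl
  | succ m ih =>
    intro k hk
    rcases Nat.eq_or_lt_of_le hk with rfl | hlt
    · rfl
    · show thetaAux h (m + 1) k = thetaOf h k
      rw [thetaAux, if_neg (by omega)]
      exact ih k (by omega)

lemma thetaOf_zero (h : ℕ → ℝ) : thetaOf h 0 = 0 := rfl

lemma thetaOf_rec (h : ℕ → ℝ) (h0 : h 0 = 1) :
    ∀ m : ℕ, 1 ≤ m → (m : ℝ) * h m = ∑ j ∈ Finset.Icc 1 m, thetaOf h j * h (m - j) := by
  intro m hm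
  obtain ⟨k, rfl⟩ : ∃ k, m = k + 1 := ⟨m - 1, by omega⟩
  have hdef : thetaOf h (k + 1)
      = ((k : ℝ) + 1) * h (k + 1) - ∑ j ∈ Finset.Icc 1 k, thetaOf h j * h (k + 1 - j) := by
    show thetaAux h (k + 1) (k + 1) = _
    rw [thetaAux, if_pos rfl]
    congr 1
    exact Finset.sum_congr rfl fun j hj =>
      by rw [thetaAux_agree h k j (Finset.mem_Icc.1 hj).2]
  have hsplit : ∑ j ∈ Finset.Icc 1 (k + 1), thetaOf h j * h (k + 1 - j)
      = (∑ j ∈ Finset.Icc 1 k, thetaOf h j * h (k + 1 - j)) + thetaOf h (k + 1) * h 0 := by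
    rw [Finset.sum_Icc_succ_top (by omega : 1 ≤ k + 1), Nat.sub_self]
  rw [hsplit, hdef, h0]
  push_cast
  ring

lemma hcoef_thetaOf (h : ℕ → ℝ) (h0 : h 0 = 1) : ∀ m, h m = hcoef (thetaOf h) m :=
  rec_unique (thetaOf h) h (hcoef (thetaOf h)) (by rw [h0, hcoef_zero])
    (thetaOf_rec h h0) (fun m hm => hcoef_rec _ hm)

lemma rep_unique (θ θ' : ℕ → ℝ) (h0 : θ 0 = 0) (h0' : θ' 0 = 0)
    (he : ∀ m, 1 ≤ m → hcoef θ m = hcoef θ' m) : θ = θ' := by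
  have heq : ∀ m, hcoef θ m = hcoef θ' m := by
    intro m
    rcases Nat.eq_zero_or_pos m with rfl | hm
    · rw [hcoef_zero, hcoef_zero]
    · exact he m hm
  funext m
  induction m using Nat.strong_induction_on with
  | _ m ih =>
    rcases Nat.eq_zero_or_pos m with rfl | hm
    · rw [h0, h0']
    · obtain ⟨k, rfl⟩ : ∃ k, m = k + 1 := ⟨m - 1, by omega⟩
      have e1 := hcoef_rec θ (m := k + 1) (by omega)
      have e2 := hcoef_rec θ' (m := k + 1) (by omega)
      rw [heq (k + 1)] at e1
      have e3 : ∑ j ∈ Finset.Icc 1 (k + 1), θ j * hcoef θ (k + 1 - j)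
          = ∑ j ∈ Finset.Icc 1 (k + 1), θ' j * hcoef θ' (k + 1 - j) := e1.symm.trans e2
      rw [Finset.sum_Icc_succ_top (by omega : 1 ≤ k + 1),
        Finset.sum_Icc_succ_top (by omega : 1 ≤ k + 1)] at e3
      have e4 : ∑ j ∈ Finset.Icc 1 k, θ j * hcoef θ (k + 1 - j)
          = ∑ j ∈ Finset.Icc 1 k, θ' j * hcoef θ' (k + 1 - j) := by
        refine Finset.sum_congr rfl fun j hj => ?_
        rw [ih j (by have := (Finset.mem_Icc.1 hj).2; omega), heq (k + 1 - j)]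
      rw [e4] at e3
      have e5 : θ (k + 1) * hcoef θ (k + 1 - (k + 1))
          = θ' (k + 1) * hcoef θ' (k + 1 - (k + 1)) := by linarith
      simpa [Nat.sub_self, hcoef_zero] using e5

lemma parts_card_pos {m : ℕ} (hm : 1 ≤ m) (lam : Nat.Partition m) :
    1 ≤ Multiset.card lam.parts := by
  by_contra hc
  push_neg at hc
  have hz : lam.parts = 0 := Multiset.card_eq_zero.1 (by omega)
  have hs := lam.parts_sum
  rw [hz, Multiset.sum_zero] at hs
  omega

/-- Proposition 2.3: correspondence between weights `(θ_j)_{j≥1}` and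
single-site normalizations `(h_m)`; nonnegativity of the weights is equivalent to infinite
divisibility. (A sequence `(θ_j)_{j ≥ 1}` is encoded as `θ : ℕ → ℝ` with `θ 0 = 0`.) -/
theorem statement4 (h : ℕ → ℝ) (hpos : ∀ m, 0 ≤ h m) (h0 : h 0 = 1)
    (hrad : ∃ z : ℝ, 0 < z ∧ Summable (fun m : ℕ => h m * z ^ m)) :
    ∃ θ : ℕ → ℝ, (θ 0 = 0 ∧ ∀ m : ℕ, 1 ≤ m → h m = hcoef θ m) ∧
      (∀ θ' : ℕ → ℝ, θ' 0 = 0 → (∀ m : ℕ, 1 ≤ m → h m = hcoef θ' m) → θ' = θ) ∧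
      ((∀ j : ℕ, 1 ≤ j → 0 ≤ θ j) ↔ InfDivisible h) := by
  refine ⟨thetaOf h, ⟨thetaOf_zero h, fun m _ => hcoef_thetaOf h h0 m⟩, ?_, ?_⟩
  · intro θ' hθ'0 hθ'
    exact rep_unique θ' (thetaOf h) hθ'0 (thetaOf_zero h)
      (fun m hm => (hθ' m hm).symm.trans (hcoef_thetaOf h h0 m))
  set θ := thetaOf h with hθdef
  have hrep : ∀ m, h m = hcoef θ m := hcoef_thetaOf h h0
  constructor
  · -- nonnegative weights give infinite divisibility
    intro hθpos n hn
    have hn0 : (n : ℝ) ≠ 0 := Nat.cast_ne_zero.2 (by omega)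
    refine ⟨hcoef (fun k => θ k / n), fun m => hcoef_nonneg _
      (fun j hj => div_nonneg (hθpos j hj) (by positivity)) m, ?_⟩
    rw [nConv_hcoef]
    have hfun : (fun j => (n : ℝ) * (θ j / n)) = θ := by
      funext j; field_simp
    rw [hfun]
    funext m
    exact (hrep m).symm
  · -- infinite divisibility gives nonnegative weights
    intro hdiv j hj
    set c : Nat.Partition j → ℝ := fun lam =>
      ∏ i ∈ lam.parts.toFinset, fct θ i (Multiset.count i lam.parts) with hc
    set q : ℝ → ℝ := fun t =>
      ∑ lam : Nat.Partition j, c lam * t ^ (Multiset.card lam.parts - 1) with hqdef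
    have hq : ∀ t : ℝ, hcoef (fun k => t * θ k) j = t * q t := by
      intro t
      rw [hcoef_scale, hqdef, Finset.mul_sum]
      refine Finset.sum_congr rfl fun lam _ => ?_
      have hcard := parts_card_pos hj lam
      obtain ⟨d, hd⟩ : ∃ d, Multiset.card lam.parts = d + 1 :=
        ⟨Multiset.card lam.parts - 1, by omega⟩
      rw [hd]
      simp only [Nat.add_sub_cancel]
      rw [pow_succ]
      ring
    have key : ∀ n : ℕ, 1 ≤ n → 0 ≤ q (1 / (n : ℝ)) := by
      intro n hn
      have hn0 : (n : ℝ) ≠ 0 := Nat.cast_ne_zero.2 (by omega)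
      obtain ⟨g, hgpos, hgconv⟩ := hdiv n hn
      have hg0 : g 0 = 1 := by
        have h1 : g 0 ^ n = 1 := by rw [← nConv_apply_zero n g, hgconv, h0]
        rcases lt_trichotomy (g 0) 1 with hlt | heq | hgt
        · exfalso
          have := pow_lt_one₀ (hgpos 0) hlt (Nat.one_le_iff_ne_zero.mp hn)
          rw [h1] at this; exact lt_irrefl _ this
        · exact heq
        · exfalso
          have := one_lt_pow₀ hgt (Nat.one_le_iff_ne_zero.mp hn)
          rw [h1] at this; exact lt_irrefl _ this
      have hgrep : ∀ m, g m = hcoef (thetaOf g) m := hcoef_thetaOf g hg0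
      have hmul : (fun k => (n : ℝ) * thetaOf g k) = θ := by
        refine rep_unique _ θ (by simp [thetaOf_zero]) (by rw [hθdef, thetaOf_zero]) ?_
        intro m hm
        have h2 : nConv n g = nConv n (hcoef (thetaOf g)) :=
          congrArg (nConv n) (funext hgrep)
        rw [← hrep m, ← hgconv, h2, nConv_hcoef]
      have hφ : thetaOf g = fun k => (1 / (n : ℝ)) * θ k := by
        funext k
        have := congrFun hmul k
        field_simp at this ⊢
        linarith
      have h3 : 0 ≤ hcoef (fun k => (1 / (n : ℝ)) * θ k) j := by
        rw [← hφ, ← hgrep j]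
        exact hgpos j
      rw [hq] at h3
      by_contra hneg
      push_neg at hneg
      have hpos' : (0 : ℝ) < 1 / n := by positivity
      have := mul_neg_of_pos_of_neg hpos' hneg
      linarith
    have hqcont : Continuous q := by
      rw [hqdef]
      exact continuous_finset_sum _ fun lam _ => (continuous_const.mul (continuous_pow _))
    have htend : Filter.Tendsto (fun n : ℕ => q (1 / (n : ℝ))) atTop (nhds (q 0)) :=
      (hqcont.tendsto 0).comp tendsto_one_div_atTop_nhds_zero_nat
    have hq0nonneg : 0 ≤ q 0 :=
      ge_of_tendsto htend (Filter.eventually_atTop.2 ⟨1, fun n hn => key n hn⟩)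
    have hq0 : q 0 = θ j / j := by
      have hq0' : q 0 = ∑ lam : Nat.Partition j,
          c lam * (0 : ℝ) ^ (Multiset.card lam.parts - 1) := rfl
      rw [hq0', Finset.sum_eq_single_of_mem (Nat.Partition.indiscrete j) (Finset.mem_univ _)]
      · have hparts : (Nat.Partition.indiscrete j).parts = {j} :=
          Nat.Partition.indiscrete_parts (by omega)
        rw [hc]
        simp only [hparts]
        rw [Multiset.toFinset_singleton, Finset.prod_singleton, Multiset.count_singleton_self]
        simp [fct]
      · intro lam _ hne
        have hcard := parts_card_pos hj lam
        have hne1 : Multiset.card lam.parts ≠ 1 := by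
          intro h1
          obtain ⟨a, ha⟩ := Multiset.card_eq_one.1 h1
          have hsum := lam.parts_sum
          rw [ha] at hsum
          simp at hsum
          refine hne (Nat.Partition.ext ?_)
          rw [ha, hsum, Nat.Partition.indiscrete_parts (by omega)]
        rw [zero_pow (by omega), mul_zero]
    rw [hq0] at hq0nonneg
    have hj0 : (0 : ℝ) < j := by exact_mod_cast hj
    have := mul_nonneg hq0nonneg (le_of_lt hj0)
    rwa [div_mul_cancel₀ _ (ne_of_gt hj0)] at this

end Spart
end
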